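/- Let K, N_t, N_r ≥ 1, let S_a and S_b be K×N_t complex matrices, let W be an invertible (K·N_r)×(K·N_r) complex matrix, and let C_h be an (N_t·N_r)×(N_t·N_r) Hermitian positive definite complex matrix. Define Ξ_a := W (I_{N_r} ⊗ S_a) C_h (I_{N_r} ⊗ S_a)^H W^H and Ξ_b := W (I_{N_r} ⊗ S_b) C_h (I_{N_r} ⊗ S_b)^H W^H. Then colsp(Ξ_a) = colsp(Ξ_b) if and only if colsp(S_a) = colsp(S_b). (Algebraic core (26)–(30) of the proof of the paper's Proposition 2: the signal subspaces at the receiver coincide exactly when the codewords span the same column space.) -/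

import Mathlib

open Matrix
open scoped Kronecker ComplexOrder

section Aux

variable {l m n : Type*} [Fintype l] [Fintype m] [Fintype n] [DecidableEq l] [DecidableEq m]

lemma aux_mulVecLin_surjective (B : Matrix m m ℂ) (hB : IsUnit B) :
    Function.Surjective B.mulVecLin := by
  intro y
  refine ⟨B⁻¹ *ᵥ y, ?_⟩
  rw [Matrix.mulVecLin_apply, Matrix.mulVec_mulVec,
    Matrix.mul_nonsing_inv _ ((Matrix.isUnit_iff_isUnit_det _).mp hB), Matrix.one_mulVec]

lemma aux_mulVecLin_injective (B : Matrix m m ℂ) (hB : IsUnit B) :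
    Function.Injective B.mulVecLin := by
  intro x y h
  have h2 := congrArg (fun v => B⁻¹ *ᵥ v) h
  simpa [Matrix.mulVecLin_apply, Matrix.mulVec_mulVec,
    Matrix.nonsing_inv_mul _ ((Matrix.isUnit_iff_isUnit_det _).mp hB),
    Matrix.one_mulVec] using h2

lemma aux_range_mul_right_unit (A : Matrix l m ℂ) (B : Matrix m m ℂ) (hB : IsUnit B) :
    LinearMap.range (A * B).mulVecLin = LinearMap.range A.mulVecLin := by
  rw [Matrix.mulVecLin_mul]
  exact LinearMap.range_comp_of_range_eq_top _
    (LinearMap.range_eq_top.mpr (aux_mulVecLin_surjective B hB))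

lemma aux_range_mul_left_unit (W : Matrix l l ℂ) (A : Matrix l m ℂ) :
    LinearMap.range (W * A).mulVecLin
      = Submodule.map W.mulVecLin (LinearMap.range A.mulVecLin) := by
  rw [Matrix.mulVecLin_mul, LinearMap.range_comp]

lemma aux_range_mul_mul_conjTranspose (M : Matrix l m ℂ) :
    LinearMap.range (M * Mᴴ).mulVecLin = LinearMap.range M.mulVecLin := by
  refine Submodule.eq_of_le_of_finrank_le ?_ ?_
  · rw [Matrix.mulVecLin_mul]
    exact LinearMap.range_comp_le_range _ _
  · exact (Matrix.rank_self_mul_conjTranspose M).ge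

lemma aux_kron_one_mulVec {Nr K Nt : ℕ} (S : Matrix (Fin K) (Fin Nt) ℂ)
    (x : Fin Nr × Fin Nt → ℂ) (i : Fin Nr) (k : Fin K) :
    (((1 : Matrix (Fin Nr) (Fin Nr) ℂ) ⊗ₖ S) *ᵥ x) (i, k)
      = (S *ᵥ fun t => x (i, t)) k := by
  simp [Matrix.mulVec, dotProduct, Fintype.sum_prod_type, Matrix.one_apply,
    ite_mul, Finset.sum_ite_eq, Finset.sum_ite_eq']

lemma aux_mem_range_kron {Nr K Nt : ℕ} (S : Matrix (Fin K) (Fin Nt) ℂ)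
    (y : Fin Nr × Fin K → ℂ) :
    y ∈ LinearMap.range ((1 : Matrix (Fin Nr) (Fin Nr) ℂ) ⊗ₖ S).mulVecLin ↔
      ∀ i, (fun k => y (i, k)) ∈ LinearMap.range S.mulVecLin := by
  constructor
  · rintro ⟨x, rfl⟩ i
    exact ⟨fun t => x (i, t), funext fun k => (aux_kron_one_mulVec S x i k).symm⟩
  · intro h
    choose x hx using h
    refine ⟨fun p => x p.1 p.2, funext fun p => ?_⟩
    obtain ⟨i, k⟩ := p
    rw [Matrix.mulVecLin_apply, aux_kron_one_mulVec]
    exact congrFun (hx i) k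

lemma aux_range_le_of_kron_le {Nr K Nt : ℕ} (hNr : 1 ≤ Nr)
    (Sa Sb : Matrix (Fin K) (Fin Nt) ℂ)
    (h : LinearMap.range ((1 : Matrix (Fin Nr) (Fin Nr) ℂ) ⊗ₖ Sa).mulVecLin ≤
         LinearMap.range ((1 : Matrix (Fin Nr) (Fin Nr) ℂ) ⊗ₖ Sb).mulVecLin) :
    LinearMap.range Sa.mulVecLin ≤ LinearMap.range Sb.mulVecLin := by
  intro y hy
  set i0 : Fin Nr := ⟨0, hNr⟩
  set Y : Fin Nr × Fin K → ℂ := fun p => if p.1 = i0 then y p.2 else 0 with hY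
  have hYa : Y ∈ LinearMap.range ((1 : Matrix (Fin Nr) (Fin Nr) ℂ) ⊗ₖ Sa).mulVecLin := by
    rw [aux_mem_range_kron]
    intro i
    by_cases hi : i = i0
    · subst hi; simpa [hY] using hy
    · refine ⟨0, ?_⟩
      funext k
      simp [hY, hi]
  have hYb := h hYa
  rw [aux_mem_range_kron] at hYb
  simpa [hY] using hYb i0

lemma aux_kron_le_of_range_le {Nr K Nt : ℕ}
    (Sa Sb : Matrix (Fin K) (Fin Nt) ℂ)
    (h : LinearMap.range Sa.mulVecLin ≤ LinearMap.range Sb.mulVecLin) :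
    LinearMap.range ((1 : Matrix (Fin Nr) (Fin Nr) ℂ) ⊗ₖ Sa).mulVecLin ≤
      LinearMap.range ((1 : Matrix (Fin Nr) (Fin Nr) ℂ) ⊗ₖ Sb).mulVecLin := by
  intro y hy
  rw [aux_mem_range_kron] at hy ⊢
  exact fun i => h (hy i)

end Aux

/-- Algebraic core (26)–(30) of the paper's Proposition 2. With codewords
`S_a, S_b : K×N_t`, an invertible `W` of size `(K·N_r)×(K·N_r)` (indexed by `Fin N_r × Fin K`)
and a Hermitian positive definite channel covariance `C_h` of size `(N_t·N_r)×(N_t·N_r)`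
(indexed by `Fin N_r × Fin N_t`), the receiver signal subspaces
`Ξ_⋄ := W (I_{N_r} ⊗ S_⋄) C_h (I_{N_r} ⊗ S_⋄)ᴴ Wᴴ` coincide exactly when the codewords span
the same column space. -/
theorem signal_subspace_eq_iff_colsp_eq {K Nt Nr : ℕ}
    (hK : 1 ≤ K) (hNt : 1 ≤ Nt) (hNr : 1 ≤ Nr)
    (Sa Sb : Matrix (Fin K) (Fin Nt) ℂ)
    (W : Matrix (Fin Nr × Fin K) (Fin Nr × Fin K) ℂ) (hW : IsUnit W)
    (Ch : Matrix (Fin Nr × Fin Nt) (Fin Nr × Fin Nt) ℂ) (hCh : Ch.PosDef)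
    (Ξa Ξb : Matrix (Fin Nr × Fin K) (Fin Nr × Fin K) ℂ)
    (hΞa : Ξa = W * ((1 : Matrix (Fin Nr) (Fin Nr) ℂ) ⊗ₖ Sa) * Ch *
        ((1 : Matrix (Fin Nr) (Fin Nr) ℂ) ⊗ₖ Sa)ᴴ * Wᴴ)
    (hΞb : Ξb = W * ((1 : Matrix (Fin Nr) (Fin Nr) ℂ) ⊗ₖ Sb) * Ch *
        ((1 : Matrix (Fin Nr) (Fin Nr) ℂ) ⊗ₖ Sb)ᴴ * Wᴴ) :
    LinearMap.range Ξa.mulVecLin = LinearMap.range Ξb.mulVecLin ↔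
      LinearMap.range Sa.mulVecLin = LinearMap.range Sb.mulVecLin := by
  -- Notation
  set Aa := (1 : Matrix (Fin Nr) (Fin Nr) ℂ) ⊗ₖ Sa with hAa
  set Ab := (1 : Matrix (Fin Nr) (Fin Nr) ℂ) ⊗ₖ Sb with hAb
  -- square root of Ch
  open scoped MatrixOrder in
  set L := CFC.sqrt Ch with hLdef
  open scoped MatrixOrder in
  have hLL : L * L = Ch := CFC.sqrt_mul_sqrt_self Ch hCh.posSemidef.nonneg
  open scoped MatrixOrder in
  have hLH : Lᴴ = L := (CFC.sqrt_nonneg Ch).posSemidef.isHermitian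
  have hLunit : IsUnit L := by
    rw [Matrix.isUnit_iff_isUnit_det]
    have : IsUnit (L.det * L.det) := by
      rw [← Matrix.det_mul, hLL, ← Matrix.isUnit_iff_isUnit_det]
      exact hCh.isUnit
    exact isUnit_of_mul_isUnit_left this
  have hWH : IsUnit Wᴴ := by
    rw [Matrix.isUnit_iff_isUnit_det, Matrix.det_conjTranspose]
    exact ((Matrix.isUnit_iff_isUnit_det _).mp hW).star
  -- rewrite each Ξ as W * ((A L) (A L)ᴴ) * Wᴴ
  have key : ∀ S : Matrix (Fin K) (Fin Nt) ℂ,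
      LinearMap.range (W * ((1 : Matrix (Fin Nr) (Fin Nr) ℂ) ⊗ₖ S) * Ch *
          ((1 : Matrix (Fin Nr) (Fin Nr) ℂ) ⊗ₖ S)ᴴ * Wᴴ).mulVecLin
        = Submodule.map W.mulVecLin
            (LinearMap.range ((1 : Matrix (Fin Nr) (Fin Nr) ℂ) ⊗ₖ S).mulVecLin) := by
    intro S
    set A := (1 : Matrix (Fin Nr) (Fin Nr) ℂ) ⊗ₖ S
    have h1 : W * A * Ch * Aᴴ * Wᴴ = (W * ((A * L) * (A * L)ᴴ)) * Wᴴ := by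
      rw [Matrix.conjTranspose_mul, hLH, ← hLL]
      simp only [Matrix.mul_assoc]
    rw [h1, aux_range_mul_right_unit _ _ hWH, aux_range_mul_left_unit,
      aux_range_mul_mul_conjTranspose, aux_range_mul_right_unit _ _ hLunit]
  rw [hΞa, hΞb, key Sa, key Sb]
  have hinj : Function.Injective (Submodule.map W.mulVecLin) :=
    Submodule.map_injective_of_injective (aux_mulVecLin_injective W hW)
  constructor
  · intro h
    have h2 := hinj h
    exact le_antisymm (aux_range_le_of_kron_le hNr Sa Sb h2.le)
      (aux_range_le_of_kron_le hNr Sb Sa h2.ge)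
  · intro h
    exact congrArg _ (le_antisymm (aux_kron_le_of_range_le Sa Sb h.le)
      (aux_kron_le_of_range_le Sb Sa h.ge))
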